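/- Let A and B be symmetric operators on a Hilbert space with B anti-self-adjoint on a common invariant domain (formally: for vectors in the domain). Then for every λ ∈ ℝ and m > 0, one has the quadratic form inequality λ[A,[B,A]] ≤ (1/(2m))A² − 2mλ² [A,B]², where [A,B]² denotes the square of the anti-hermitian commutator (a non-positive operator). Equivalently: for a vector ξ in the domain, λ⟨ξ, [A,[B,A]]ξ⟩ ≤ (1/(2m))⟨Aξ, Aξ⟩ − 2mλ²⟨ξ, [A,B]²ξ⟩. -/
import Mathlib


open scoped InnerProductSpace

/-- The Lieb–Yamazaki commutator inequality: for symmetric `A`, `B` and any `λ ∈ ℝ`, `m > 0`,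
`λ⟨ξ, [A,[B,A]]ξ⟩ ≤ (1/(2m))⟨Aξ, Aξ⟩ − 2mλ²⟨ξ, [A,B]²ξ⟩` as quadratic forms. -/
theorem lieb_yamazaki_commutator_bound
    {H : Type*} [NormedAddCommGroup H] [InnerProductSpace ℂ H]
    (A B : H →L[ℂ] H)
    (hA : ∀ x y : H, ⟪A x, y⟫_ℂ = ⟪x, A y⟫_ℂ)
    (hB : ∀ x y : H, ⟪B x, y⟫_ℂ = ⟪x, B y⟫_ℂ)
    (lam m : ℝ) (hm : 0 < m) (ξ : H) :
    lam * (⟪ξ, (A.comp (B.comp A - A.comp B) - (B.comp A - A.comp B).comp A) ξ⟫_ℂ).re ≤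
      (1 / (2 * m)) * (⟪A ξ, A ξ⟫_ℂ).re -
        2 * m * lam ^ 2 *
          (⟪ξ, ((A.comp B - B.comp A).comp (A.comp B - B.comp A)) ξ⟫_ℂ).re := by
  set C : H →L[ℂ] H := A.comp B - B.comp A with hCdef
  have hC : ∀ x y : H, ⟪C x, y⟫_ℂ = -⟪x, C y⟫_ℂ := by
    intro x y
    simp only [hCdef, ContinuousLinearMap.sub_apply, ContinuousLinearMap.comp_apply,
      inner_sub_left, inner_sub_right]
    rw [hA, hB, hB (A x) y, hA x (B y)]
    ring
  set u := A ξ with hu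
  set v := C ξ with hv
  have h1 : ⟪ξ, C u⟫_ℂ = -⟪v, u⟫_ℂ := by
    have h := hC ξ u; rw [← hv] at h; linear_combination h
  have h2 : ⟪ξ, A v⟫_ℂ = ⟪u, v⟫_ℂ := by
    rw [← hA ξ v]
  have hop : (A.comp (B.comp A - A.comp B) - (B.comp A - A.comp B).comp A) ξ
      = C u - A v := by
    simp only [hv, hu, hCdef, ContinuousLinearMap.sub_apply, ContinuousLinearMap.comp_apply,
      map_sub]
    abel
  have hsym : (⟪u, v⟫_ℂ).re = (⟪v, u⟫_ℂ).re := by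
    rw [← inner_conj_symm v u, Complex.conj_re]
  have hL : (⟪ξ, (A.comp (B.comp A - A.comp B) - (B.comp A - A.comp B).comp A) ξ⟫_ℂ).re
      = -2 * (⟪v, u⟫_ℂ).re := by
    rw [hop, inner_sub_right, h1, h2]
    simp only [Complex.sub_re, Complex.neg_re, hsym]
    ring
  have hvv : (⟪v, v⟫_ℂ).re = ‖v‖ ^ 2 := by
    rw [← @inner_self_eq_norm_sq ℂ]; rfl
  have hR : (⟪ξ, ((A.comp B - B.comp A).comp (A.comp B - B.comp A)) ξ⟫_ℂ).re
      = -‖v‖ ^ 2 := by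
    have hvc : ((A.comp B - B.comp A).comp (A.comp B - B.comp A)) ξ = C v := rfl
    have h3 : ⟪ξ, C v⟫_ℂ = -⟪v, v⟫_ℂ := by
      have h := hC ξ v; rw [← hv] at h; linear_combination h
    rw [hvc, h3, Complex.neg_re, hvv]
  have hU : (⟪u, u⟫_ℂ).re = ‖u‖ ^ 2 := by
    rw [← @inner_self_eq_norm_sq ℂ]; rfl
  rw [hL, hR, hU]
  have hcs : |(⟪v, u⟫_ℂ).re| ≤ ‖v‖ * ‖u‖ := by
    calc |(⟪v, u⟫_ℂ).re| ≤ ‖⟪v, u⟫_ℂ‖ := Complex.abs_re_le_norm _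
    _ ≤ ‖v‖ * ‖u‖ := norm_inner_le_norm v u
  have hcs1 : -(‖v‖ * ‖u‖) ≤ (⟪v, u⟫_ℂ).re := neg_le_of_abs_le hcs
  have hcs2 : (⟪v, u⟫_ℂ).re ≤ ‖v‖ * ‖u‖ := le_of_abs_le hcs
  have h2m : (0:ℝ) < 2 * m := by linarith
  rw [show (1 / (2 * m)) * ‖u‖ ^ 2 - 2 * m * lam ^ 2 * -‖v‖ ^ 2
      = (‖u‖ ^ 2 + (2 * m) ^ 2 * lam ^ 2 * ‖v‖ ^ 2) / (2 * m) by field_simp; ring]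
  rw [le_div_iff₀ h2m]
  rcases le_or_gt 0 lam with hlam | hlam
  · nlinarith [sq_nonneg (‖u‖ - 2 * m * lam * ‖v‖),
      mul_le_mul_of_nonneg_left hcs1 (by positivity : (0:ℝ) ≤ 4 * m * lam)]
  · nlinarith [sq_nonneg (‖u‖ + 2 * m * lam * ‖v‖),
      mul_le_mul_of_nonneg_left hcs2 (by nlinarith : (0:ℝ) ≤ 4 * m * (-lam))]
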